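/- Let K ≥ 1, T ≥ 1, γ ∈ (0,1), η > 0, and let x̂_t(i) ≥ 0 for t = 1,…,T and i = 1,…,K satisfy η·x̂_t(i) ≤ 1 for all t, i. Define weights w_1(i) = 1 and w_{t+1}(i) = w_t(i)·exp(η·x̂_t(i)), and mixed probabilities p_t(i) = (1−γ)·w_t(i)/∑_{j=1}^K w_t(j) + γ/K. Then for every j ∈ {1,…,K}: ∑_{t=1}^T x̂_t(j) − ∑_{t=1}^T ∑_{i=1}^K p_t(i)·x̂_t(i) ≤ γ·∑_{t=1}^T x̂_t(j) + (e−2)·η·∑_{t=1}^T ∑_{i=1}^K p_t(i)·x̂_t(i)² + (ln K)/η. -/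

import Mathlib

set_option maxHeartbeats 1000000 in
private lemma exp_quad {z : ℝ} (h0 : 0 ≤ z) (h1 : z ≤ 1) :
    Real.exp z ≤ 1 + z + (Real.exp 1 - 2) * z ^ 2 := by
  have key : ∀ x : ℝ, Real.exp x = 1 + x + ∑' n : ℕ, x ^ (n + 2) / (n + 2).factorial := by
    intro x
    have hs : Summable (fun n : ℕ => x ^ (n + 2) / (n + 2).factorial) :=
      (summable_nat_add_iff 2).mpr (Real.summable_pow_div_factorial x)
    have h2 := Summable.sum_add_tsum_nat_add' (f := fun n : ℕ => x ^ n / n.factorial) (k := 2) hs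
    have h3 : Real.exp x = ∑' n : ℕ, x ^ n / n.factorial := by
      rw [Real.exp_eq_exp_ℝ, NormedSpace.exp_eq_tsum_div]
    rw [h3, ← h2]
    simp [Finset.sum_range_succ]
  have hsz : Summable (fun n : ℕ => z ^ (n + 2) / (n + 2).factorial) :=
    (summable_nat_add_iff 2).mpr (Real.summable_pow_div_factorial z)
  have hs1 : Summable (fun n : ℕ => z ^ 2 * ((1:ℝ) ^ (n + 2) / (n + 2).factorial)) :=
    (((summable_nat_add_iff 2).mpr (Real.summable_pow_div_factorial 1))).mul_left _
  have hle : ∑' n : ℕ, z ^ (n + 2) / (n + 2).factorial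
      ≤ ∑' n : ℕ, z ^ 2 * ((1:ℝ) ^ (n + 2) / (n + 2).factorial) := by
    apply Summable.tsum_le_tsum _ hsz hs1
    intro n
    rw [one_pow, mul_one_div]
    exact div_le_div_of_nonneg_right (pow_le_pow_of_le_one h0 h1 (by omega)) (by positivity)
  have e1 : Real.exp 1 = 1 + 1 + ∑' n : ℕ, (1:ℝ) ^ (n + 2) / (n + 2).factorial := by
    simpa using key 1
  rw [tsum_mul_left] at hle
  rw [key z]
  nlinarith [hle]



/-- Exponential-weights weight sequence: `w 0 i = 1` and
`w (t+1) i = w t i · exp(η · x̂ t i)`. -/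
noncomputable def ewWeight (K : ℕ) (η : ℝ) (xhat : ℕ → Fin K → ℝ) :
    ℕ → Fin K → ℝ
  | 0 => fun _ => 1
  | t + 1 => fun i => ewWeight K η xhat t i * Real.exp (η * xhat t i)

/-- Mixed exponential-weights probabilities
`p t i = (1−γ)·w t i / ∑ j, w t j + γ/K`. -/
noncomputable def ewMixedProb (K : ℕ) (γ η : ℝ) (xhat : ℕ → Fin K → ℝ)
    (t : ℕ) (i : Fin K) : ℝ :=
  (1 - γ) * ewWeight K η xhat t i / (∑ j, ewWeight K η xhat t j) + γ / K

set_option maxHeartbeats 1000000 in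
/-- deterministic regret guarantee of the exponential-weights
update with uniform mixing `γ`: for nonnegative estimated rewards `x̂ t i`
with `η·x̂ t i ≤ 1`, and for every `j`,
`∑_t x̂ t j − ∑_t ∑_i p t i·x̂ t i
   ≤ γ·∑_t x̂ t j + (e−2)·η·∑_t ∑_i p t i·(x̂ t i)² + (ln K)/η`.
(Rounds `t = 1,…,T` are indexed by `t ∈ range T`.) -/
theorem ew_mixed_regret (K T : ℕ) (hK : 1 ≤ K) (hT : 1 ≤ T)
    (γ : ℝ) (hγ0 : 0 < γ) (hγ1 : γ < 1)
    (η : ℝ) (hη : 0 < η)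
    (xhat : ℕ → Fin K → ℝ)
    (hx0 : ∀ t < T, ∀ i, 0 ≤ xhat t i)
    (hx1 : ∀ t < T, ∀ i, η * xhat t i ≤ 1)
    (j : Fin K) :
    ∑ t ∈ Finset.range T, xhat t j -
        ∑ t ∈ Finset.range T, ∑ i, ewMixedProb K γ η xhat t i * xhat t i ≤
      γ * ∑ t ∈ Finset.range T, xhat t j +
        (Real.exp 1 - 2) * η *
          ∑ t ∈ Finset.range T, ∑ i, ewMixedProb K γ η xhat t i * xhat t i ^ 2 +
        Real.log K / η := by
  have hγ' : (0:ℝ) < 1 - γ := by linarith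
  have he2 : (0:ℝ) < Real.exp 1 - 2 := by
    have := Real.exp_one_gt_d9; linarith
  haveI : NeZero K := ⟨by omega⟩
  set w := ewWeight K η xhat with hw
  set W : ℕ → ℝ := fun t => ∑ i, w t i with hW
  set p := ewMixedProb K γ η xhat with hp
  set A : ℕ → ℝ := fun t => ∑ i, p t i * xhat t i with hA
  set B : ℕ → ℝ := fun t => ∑ i, p t i * xhat t i ^ 2 with hB
  have hwpos : ∀ t i, 0 < w t i := by
    intro t
    induction t with
    | zero => intro i; rw [hw]; simp [ewWeight]
    | succ t ih =>
      intro i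
      rw [hw]
      show 0 < ewWeight K η xhat t i * Real.exp (η * xhat t i)
      exact mul_pos (ih i) (Real.exp_pos _)
  have hWpos : ∀ t, 0 < W t := fun t =>
    Finset.sum_pos (fun i _ => hwpos t i) Finset.univ_nonempty
  have hppos : ∀ t i, 0 ≤ p t i := by
    intro t i
    rw [hp]
    unfold ewMixedProb
    have h1 : 0 ≤ (1 - γ) * ewWeight K η xhat t i / (∑ j, ewWeight K η xhat t j) :=
      div_nonneg (mul_nonneg hγ'.le (hwpos t i).le) (hWpos t).le
    have h2 : (0:ℝ) ≤ γ / K := by positivity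
    linarith
  -- w ≤ W/(1-γ) * p
  have hwle : ∀ t i, w t i ≤ W t / (1 - γ) * p t i := by
    intro t i
    have h1 : (1 - γ) * w t i / W t ≤ p t i := by
      rw [hp]
      unfold ewMixedProb
      have h2 : (0:ℝ) ≤ γ / K := by positivity
      have : (1 - γ) * w t i / W t = (1 - γ) * ewWeight K η xhat t i / (∑ j, ewWeight K η xhat t j) := rfl
      rw [this]; linarith
    rw [div_le_iff₀ (hWpos t)] at h1
    rw [div_mul_eq_mul_div, le_div_iff₀ hγ']
    nlinarith [h1]
  -- per-step bound
  have hstep : ∀ t < T, Real.log (W (t+1)) - Real.log (W t) ≤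
      η / (1 - γ) * A t + (Real.exp 1 - 2) * η ^ 2 / (1 - γ) * B t := by
    intro t ht
    have hA0 : 0 ≤ A t :=
      Finset.sum_nonneg fun i _ => mul_nonneg (hppos t i) (hx0 t ht i)
    have hB0 : 0 ≤ B t :=
      Finset.sum_nonneg fun i _ => mul_nonneg (hppos t i) (sq_nonneg _)
    set r := η / (1 - γ) * A t + (Real.exp 1 - 2) * η ^ 2 / (1 - γ) * B t with hr
    have hr0 : 0 ≤ r := by
      have : 0 ≤ η / (1 - γ) * A t := by positivity
      have : 0 ≤ (Real.exp 1 - 2) * η ^ 2 / (1 - γ) * B t := by positivity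
      rw [hr]; positivity
    have hWt1 : W (t+1) ≤ W t * (1 + r) := by
      have hs1 : ∑ i, w t i * xhat t i ≤ W t / (1 - γ) * A t := by
        rw [hA, Finset.mul_sum]
        apply Finset.sum_le_sum
        intro i _
        have := mul_le_mul_of_nonneg_right (hwle t i) (hx0 t ht i)
        nlinarith [this]
      have hs2 : ∑ i, w t i * xhat t i ^ 2 ≤ W t / (1 - γ) * B t := by
        rw [hB, Finset.mul_sum]
        apply Finset.sum_le_sum
        intro i _
        have := mul_le_mul_of_nonneg_right (hwle t i) (sq_nonneg (xhat t i))
        nlinarith [this]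
      calc W (t+1) = ∑ i, w t i * Real.exp (η * xhat t i) := by
              apply Finset.sum_congr rfl; intro i _; rfl
        _ ≤ ∑ i, w t i * (1 + η * xhat t i + (Real.exp 1 - 2) * (η * xhat t i) ^ 2) := by
              apply Finset.sum_le_sum
              intro i _
              exact mul_le_mul_of_nonneg_left
                (exp_quad (mul_nonneg hη.le (hx0 t ht i)) (hx1 t ht i)) (hwpos t i).le
        _ = W t + η * ∑ i, w t i * xhat t i
              + (Real.exp 1 - 2) * η ^ 2 * ∑ i, w t i * xhat t i ^ 2 := by
              rw [hW, Finset.mul_sum, Finset.mul_sum, ← Finset.sum_add_distrib,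
                ← Finset.sum_add_distrib]
              apply Finset.sum_congr rfl; intro i _; ring
        _ ≤ W t + η * (W t / (1 - γ) * A t)
              + (Real.exp 1 - 2) * η ^ 2 * (W t / (1 - γ) * B t) := by
              have h1 := mul_le_mul_of_nonneg_left hs1 hη.le
              have h2 := mul_le_mul_of_nonneg_left hs2 (by positivity : (0:ℝ) ≤ (Real.exp 1 - 2) * η ^ 2)
              linarith
        _ = W t * (1 + r) := by rw [hr]; field_simp; ring
    have h3 := Real.log_le_sub_one_of_pos (div_pos (hWpos (t+1)) (hWpos t))
    rw [Real.log_div (hWpos _).ne' (hWpos t).ne'] at h3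
    have h4 : W (t+1) / W t ≤ 1 + r := by
      rw [div_le_iff₀ (hWpos t)]
      nlinarith [hWt1, hWpos t]
    have h5 : Real.log (W (t+1)) - Real.log (W t) ≤ r := by
      refine h3.trans ?_
      linarith
    exact h5
  -- telescope
  set S := ∑ t ∈ Finset.range T, A t with hS
  set Q := ∑ t ∈ Finset.range T, B t with hQ
  have htel : Real.log (W T) - Real.log (W 0) ≤
      η / (1 - γ) * S + (Real.exp 1 - 2) * η ^ 2 / (1 - γ) * Q := by
    rw [← Finset.sum_range_sub (fun t => Real.log (W t))]
    calc ∑ t ∈ Finset.range T, (Real.log (W (t+1)) - Real.log (W t))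
        ≤ ∑ t ∈ Finset.range T,
            (η / (1 - γ) * A t + (Real.exp 1 - 2) * η ^ 2 / (1 - γ) * B t) :=
          Finset.sum_le_sum fun t ht => hstep t (Finset.mem_range.mp ht)
      _ = η / (1 - γ) * S + (Real.exp 1 - 2) * η ^ 2 / (1 - γ) * Q := by
          rw [hS, hQ, Finset.sum_add_distrib, Finset.mul_sum, Finset.mul_sum]
  have hW0 : W 0 = K := by
    rw [hW]
    show (∑ _i : Fin K, (1:ℝ)) = K
    simp
  set G := ∑ t ∈ Finset.range T, xhat t j with hG
  have hwj : ∀ t, w t j = Real.exp (η * ∑ s ∈ Finset.range t, xhat s j) := by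
    intro t
    induction t with
    | zero => rw [hw]; simp [ewWeight]
    | succ t ih =>
      rw [hw]
      show ewWeight K η xhat t j * Real.exp (η * xhat t j) = _
      rw [← hw, ih, ← Real.exp_add, Finset.sum_range_succ, mul_add]
  have hGle : η * G ≤ Real.log (W T) := by
    rw [Real.le_log_iff_exp_le (hWpos T)]
    have h8 : w T j ≤ W T := Finset.single_le_sum (f := fun i => w T i)
      (fun i _ => (hwpos T i).le) (Finset.mem_univ j)
    rw [hwj T] at h8
    exact h8
  have hlogK : 0 ≤ Real.log K := Real.log_nonneg (by exact_mod_cast hK)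
  have key : η * G - Real.log K ≤
      η / (1 - γ) * S + (Real.exp 1 - 2) * η ^ 2 / (1 - γ) * Q := by
    rw [hW0] at htel; linarith
  have key' : (1 - γ) * (η * G - Real.log K) ≤
      η * S + (Real.exp 1 - 2) * η ^ 2 * Q := by
    have h5 := mul_le_mul_of_nonneg_left key hγ'.le
    have h6 : (1 - γ) * (η / (1 - γ) * S + (Real.exp 1 - 2) * η ^ 2 / (1 - γ) * Q)
        = η * S + (Real.exp 1 - 2) * η ^ 2 * Q := by
      field_simp
    linarith
  have h7 : G - S - γ * G - (Real.exp 1 - 2) * η * Q ≤ Real.log K / η := by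
    rw [le_div_iff₀ hη]
    nlinarith [key', mul_nonneg hγ0.le hlogK]
  linarith
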